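/- Let K be a Hopf algebra with bijective antipode S. Regard K as a left comodule over itself via the coproduct and as a right module over itself via k · h := S(h^{(2)}) k h^{(1)}. Then K is a stable right-left anti-Yetter-Drinfeld module over itself. -/

import Mathlib

open TensorProduct

namespace HC

variable {k : Type} [Field k]
variable {H : Type} [Ring H] [Algebra k H]
variable {M : Type} [AddCommGroup M] [Module k M]

/-- The right-left anti-Yetter-Drinfeld condition
`Δ_M(mh) = S(h⁽³⁾) m⁽⁻¹⁾ h⁽¹⁾ ⊗ m⁽⁰⁾ h⁽²⁾` (right action in curried form,
`m · h = act h m`). -/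
def AYDrl (Δ : H →ₗ[k] H ⊗[k] H) (S : H →ₗ[k] H)
    (act : H →ₗ[k] M →ₗ[k] M) (coact : M →ₗ[k] H ⊗[k] M) : Prop :=
  ∀ (h : H) (m : M) (s : Finset ℕ) (a b : ℕ → H)
    (t : ℕ → Finset ℕ) (c d : ℕ → ℕ → H)
    (u : Finset ℕ) (e : ℕ → H) (m0 : ℕ → M),
    Δ h = ∑ i ∈ s, a i ⊗ₜ b i →
    (∀ i ∈ s, Δ (b i) = ∑ j ∈ t i, c i j ⊗ₜ d i j) →
    coact m = ∑ l ∈ u, e l ⊗ₜ m0 l →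
    coact (act h m) = ∑ i ∈ s, ∑ j ∈ t i, ∑ l ∈ u,
      (S (d i j) * e l * a i) ⊗ₜ act (c i j) (m0 l)

/-- Stability: `m⁽⁰⁾ · m⁽⁻¹⁾ = m`. -/
def StableL (act : H →ₗ[k] M →ₗ[k] M) (coact : M →ₗ[k] H ⊗[k] M) : Prop :=
  ∀ (m : M) (u : Finset ℕ) (e : ℕ → H) (m0 : ℕ → M),
    coact m = ∑ l ∈ u, e l ⊗ₜ m0 l →
    ∑ l ∈ u, act (e l) (m0 l) = m

end HC

open HC TensorProduct

/-- The right `H`-action of a Hopf algebra on itself given by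
`x · h = S(h⁽²⁾) x h⁽¹⁾`, in curried form. -/
noncomputable def adAct {k : Type} [Field k] {H : Type} [Ring H] [HopfAlgebra k H] :
    H →ₗ[k] H →ₗ[k] H :=
  TensorProduct.curry
    ((LinearMap.mul' k H) ∘ₗ
      (TensorProduct.map LinearMap.id
        ((LinearMap.mul' k H) ∘ₗ (TensorProduct.comm k H H).toLinearMap)) ∘ₗ
      (TensorProduct.assoc k H H H).toLinearMap ∘ₗ
      (TensorProduct.map
        ((TensorProduct.map (HopfAlgebra.antipode (R := k)) LinearMap.id) ∘ₗ
          (TensorProduct.comm k H H).toLinearMap ∘ₗ (Coalgebra.comul (R := k)))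
        LinearMap.id))


set_option synthInstance.maxHeartbeats 400000
set_option maxHeartbeats 1000000

section Aux

variable {k : Type} [Field k] {H : Type} [Ring H] [HopfAlgebra k H]
variable {V : Type} [AddCommGroup V] [Module k V]

local notation "S" => HopfAlgebra.antipode (R := k)

lemma act_eq {ι : Type*} (s : Finset ι) (a b : ι → H) (h m : H)
    (hh : Coalgebra.comul (R := k) h = ∑ i ∈ s, a i ⊗ₜ b i) :
    adAct (k := k) h m = ∑ i ∈ s, S (b i) * m * a i := by
  simp only [adAct, TensorProduct.curry_apply, LinearMap.comp_apply, LinearEquiv.coe_coe,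
    TensorProduct.map_tmul, LinearMap.id_apply, LinearEquiv.coe_coe]
  rw [hh]
  simp only [map_sum, TensorProduct.comm_tmul, TensorProduct.map_tmul,
    TensorProduct.sum_tmul, TensorProduct.assoc_tmul, LinearMap.id_apply, LinearMap.comp_apply, LinearEquiv.coe_coe,
    LinearMap.mul'_apply, mul_assoc]

lemma quad {ι : Type*} {ι' : ι → Type*} (B : H ⊗[k] H →ₗ[k] H ⊗[k] H →ₗ[k] V) (x : H)
    (s : Finset ι) (a b : ι → H) (t : ∀ i, Finset (ι' i)) (c d : ∀ i, ι' i → H)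
    (hx : Coalgebra.comul (R := k) x = ∑ i ∈ s, a i ⊗ₜ b i)
    (hb : ∀ i ∈ s, Coalgebra.comul (R := k) (b i) = ∑ j ∈ t i, c i j ⊗ₜ d i j)
    (r3 : ∀ i, ∀ j : ι' i, Coalgebra.Repr k (c i j) (H × H)) :
    ∑ i ∈ s, ∑ j ∈ t i, B (Coalgebra.comul (R := k) (a i)) (c i j ⊗ₜ d i j)
      = ∑ i ∈ s, ∑ j ∈ t i, ∑ q ∈ (r3 i j).index,
          B (a i ⊗ₜ (r3 i j).left q) ((r3 i j).right q ⊗ₜ d i j) := by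
  classical
  -- Step A : coassociativity applied to x, in expanded form
  have star : ∑ i ∈ s, (Coalgebra.comul (R := k) (a i)) ⊗ₜ[k] b i
      = ∑ i ∈ s, ∑ j ∈ t i, (a i ⊗ₜ[k] c i j) ⊗ₜ[k] d i j := by
    have h1 := Coalgebra.coassoc_symm_apply (R := k) x
    rw [hx] at h1
    simp only [map_sum, LinearMap.lTensor_tmul, LinearMap.rTensor_tmul] at h1
    rw [← h1]
    rw [Finset.sum_congr rfl (fun i hi => by rw [hb i hi])]
    simp only [tmul_sum, map_sum, LinearEquiv.coe_coe, TensorProduct.assoc_symm_tmul]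
  -- Step B : apply Q := lift B ∘ lTensor comul to star
  set Q : (H ⊗[k] H) ⊗[k] H →ₗ[k] V :=
    (TensorProduct.lift B) ∘ₗ ((Coalgebra.comul (R := k)).lTensor (H ⊗[k] H)) with hQ
  have hQstar := congrArg Q star
  simp only [map_sum] at hQstar
  have hL : ∀ i ∈ s, Q ((Coalgebra.comul (R := k) (a i)) ⊗ₜ[k] b i)
      = ∑ j ∈ t i, B (Coalgebra.comul (R := k) (a i)) (c i j ⊗ₜ d i j) := by
    intro i hi
    simp only [hQ, LinearMap.comp_apply, LinearMap.lTensor_tmul, hb i hi, tmul_sum,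
      map_sum, TensorProduct.lift.tmul]
  -- Step C : second coassociativity, on each b i
  have hR : ∀ i ∈ s, ∑ j ∈ t i, Q ((a i ⊗ₜ[k] c i j) ⊗ₜ[k] d i j)
      = ∑ j ∈ t i, ∑ q ∈ (r3 i j).index,
          B (a i ⊗ₜ (r3 i j).left q) ((r3 i j).right q ⊗ₜ d i j) := by
    intro i hi
    set R : (H ⊗[k] H) ⊗[k] H →ₗ[k] V :=
      (TensorProduct.lift B) ∘ₗ
        (TensorProduct.assoc k H H (H ⊗[k] H)).symm.toLinearMap ∘ₗ
        (TensorProduct.mk k H (H ⊗[k] (H ⊗[k] H)) (a i)) ∘ₗ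
        (TensorProduct.assoc k H H H).toLinearMap with hRdef
    have starstar : ∑ j ∈ t i, ∑ q ∈ (r3 i j).index,
        (((r3 i j).left q ⊗ₜ[k] (r3 i j).right q) ⊗ₜ[k] d i j)
        = ∑ j ∈ t i, (TensorProduct.assoc k H H H).symm
            (c i j ⊗ₜ[k] Coalgebra.comul (R := k) (d i j)) := by
      have h2 := Coalgebra.coassoc_symm_apply (R := k) (b i)
      rw [hb i hi] at h2
      simp only [map_sum, LinearMap.lTensor_tmul, LinearMap.rTensor_tmul] at h2
      rw [h2]
      refine Finset.sum_congr rfl (fun j _ => ?_)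
      rw [← (r3 i j).eq, sum_tmul]
    have e1 := congrArg R starstar
    simp only [map_sum] at e1
    have lhs1 : ∀ j ∈ t i, ∑ q ∈ (r3 i j).index,
        R (((r3 i j).left q ⊗ₜ[k] (r3 i j).right q) ⊗ₜ[k] d i j)
        = ∑ q ∈ (r3 i j).index,
          B (a i ⊗ₜ (r3 i j).left q) ((r3 i j).right q ⊗ₜ d i j) := by
      intro j _
      refine Finset.sum_congr rfl (fun q _ => ?_)
      simp only [hRdef, LinearMap.comp_apply, LinearEquiv.coe_coe, assoc_tmul,
        TensorProduct.mk_apply, assoc_symm_tmul, TensorProduct.lift.tmul]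
    have rhs1 : ∀ j ∈ t i, R ((TensorProduct.assoc k H H H).symm
          (c i j ⊗ₜ[k] Coalgebra.comul (R := k) (d i j)))
        = Q ((a i ⊗ₜ[k] c i j) ⊗ₜ[k] d i j) := by
      intro j _
      simp only [hRdef, hQ, LinearMap.comp_apply, LinearEquiv.coe_coe,
        LinearEquiv.apply_symm_apply, TensorProduct.mk_apply, LinearMap.lTensor_tmul]
      obtain ⟨w, hw⟩ := TensorProduct.exists_finset (R := k) (Coalgebra.comul (R := k) (d i j))
      rw [hw]
      simp only [tmul_sum, map_sum, assoc_symm_tmul, TensorProduct.lift.tmul]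
    calc ∑ j ∈ t i, Q ((a i ⊗ₜ[k] c i j) ⊗ₜ[k] d i j)
        = ∑ j ∈ t i, R ((TensorProduct.assoc k H H H).symm
            (c i j ⊗ₜ[k] Coalgebra.comul (R := k) (d i j))) :=
          Finset.sum_congr rfl (fun j hj => (rhs1 j hj).symm)
      _ = ∑ j ∈ t i, ∑ q ∈ (r3 i j).index,
            R (((r3 i j).left q ⊗ₜ[k] (r3 i j).right q) ⊗ₜ[k] d i j) := e1.symm
      _ = _ := Finset.sum_congr rfl lhs1
  calc ∑ i ∈ s, ∑ j ∈ t i, B (Coalgebra.comul (R := k) (a i)) (c i j ⊗ₜ d i j)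
      = ∑ i ∈ s, Q ((Coalgebra.comul (R := k) (a i)) ⊗ₜ[k] b i) :=
        Finset.sum_congr rfl (fun i hi => (hL i hi).symm)
    _ = ∑ i ∈ s, ∑ j ∈ t i, Q ((a i ⊗ₜ[k] c i j) ⊗ₜ[k] d i j) := hQstar
    _ = _ := Finset.sum_congr rfl hR


lemma conv_right {ι : Type*} (y : H) (s : Finset ι) (a b : ι → H)
    (hy : Coalgebra.comul (R := k) y = ∑ i ∈ s, a i ⊗ₜ b i) :
    ∑ i ∈ s, Coalgebra.comul (R := k) (a i) *
        (TensorProduct.map S S) ((TensorProduct.comm k H H) (Coalgebra.comul (R := k) (b i)))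
      = Coalgebra.counit (R := k) y • 1 := by
  classical
  set B₂ : H ⊗[k] H →ₗ[k] H ⊗[k] H →ₗ[k] H ⊗[k] H :=
    LinearMap.mk₂ k
      (fun ξ η => ξ * (TensorProduct.map S S) ((TensorProduct.comm k H H) η))
      (fun ξ ξ' η => by rw [add_mul])
      (fun r ξ η => by rw [smul_mul_assoc])
      (fun ξ η η' => by rw [map_add, map_add, mul_add])
      (fun r ξ η => by rw [map_smul, map_smul, mul_smul_comm]) with hB₂
  set rb : ∀ i : ι, Coalgebra.Repr k (b i) (H × H) := fun i => Coalgebra.Repr.arbitrary k (b i) with hrb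
  set r3 : ∀ (i : ι) (j : H × H), Coalgebra.Repr k ((rb i).left j) (H × H) :=
    fun i j => Coalgebra.Repr.arbitrary k ((rb i).left j) with hr3
  have key := quad B₂ y s a b (fun i => (rb i).index) (fun i => (rb i).left)
    (fun i => (rb i).right) hy (fun i _ => ((rb i).eq).symm) r3
  have lhs : ∑ i ∈ s, Coalgebra.comul (R := k) (a i) *
        (TensorProduct.map S S) ((TensorProduct.comm k H H) (Coalgebra.comul (R := k) (b i)))
      = ∑ i ∈ s, ∑ j ∈ (rb i).index,
          B₂ (Coalgebra.comul (R := k) (a i)) ((rb i).left j ⊗ₜ (rb i).right j) := by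
    refine Finset.sum_congr rfl (fun i _ => ?_)
    rw [← (rb i).eq]
    simp only [map_sum, Finset.mul_sum, hB₂, LinearMap.mk₂_apply]
  have rhs : ∑ i ∈ s, ∑ j ∈ (rb i).index, ∑ q ∈ (r3 i j).index,
        B₂ (a i ⊗ₜ (r3 i j).left q) ((r3 i j).right q ⊗ₜ (rb i).right j)
      = Coalgebra.counit (R := k) y • 1 := by
    have step1 : ∀ i ∈ s, ∑ j ∈ (rb i).index, ∑ q ∈ (r3 i j).index,
          B₂ (a i ⊗ₜ (r3 i j).left q) ((r3 i j).right q ⊗ₜ (rb i).right j)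
        = (a i * S (b i)) ⊗ₜ[k] (1 : H) := by
      intro i _
      have inner : ∀ j ∈ (rb i).index, ∑ q ∈ (r3 i j).index,
            B₂ (a i ⊗ₜ (r3 i j).left q) ((r3 i j).right q ⊗ₜ (rb i).right j)
          = Coalgebra.counit (R := k) ((rb i).left j) •
              ((a i * S ((rb i).right j)) ⊗ₜ[k] (1 : H)) := by
        intro j _
        have : ∀ q ∈ (r3 i j).index,
            B₂ (a i ⊗ₜ (r3 i j).left q) ((r3 i j).right q ⊗ₜ (rb i).right j)
            = (a i * S ((rb i).right j)) ⊗ₜ[k] ((r3 i j).left q * S ((r3 i j).right q)) := by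
          intro q _
          simp only [hB₂, LinearMap.mk₂_apply, TensorProduct.comm_tmul,
            TensorProduct.map_tmul, Algebra.TensorProduct.tmul_mul_tmul]
        rw [Finset.sum_congr rfl this, ← TensorProduct.tmul_sum,
          HopfAlgebra.sum_mul_antipode_eq_smul (r3 i j), TensorProduct.tmul_smul]
      rw [Finset.sum_congr rfl inner]
      have hb' : ∑ j ∈ (rb i).index,
          Coalgebra.counit (R := k) ((rb i).left j) • (rb i).right j = b i := by
        have h0 := congrArg (TensorProduct.lid k H) (Coalgebra.sum_counit_tmul_eq (rb i))
        simp only [map_sum, TensorProduct.lid_tmul, one_smul] at h0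
        exact h0
      calc ∑ j ∈ (rb i).index, Coalgebra.counit (R := k) ((rb i).left j) •
              ((a i * S ((rb i).right j)) ⊗ₜ[k] (1 : H))
          = ∑ j ∈ (rb i).index, (a i * S (Coalgebra.counit (R := k) ((rb i).left j) •
              (rb i).right j)) ⊗ₜ[k] (1 : H) := by
            refine Finset.sum_congr rfl (fun j _ => ?_)
            rw [map_smul, mul_smul_comm, TensorProduct.smul_tmul']
        _ = (a i * S (b i)) ⊗ₜ[k] (1 : H) := by
            rw [← TensorProduct.sum_tmul, ← Finset.mul_sum, ← map_sum, hb']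
    rw [Finset.sum_congr rfl step1, ← TensorProduct.sum_tmul,
      HopfAlgebra.sum_mul_antipode_eq_smul (⟨s, a, b, hy.symm⟩ : Coalgebra.Repr k y ι),
      Algebra.TensorProduct.one_def, TensorProduct.smul_tmul']
  rw [lhs, key, rhs]

lemma comul_antipode (x : H) :
    Coalgebra.comul (R := k) (S x) =
      (TensorProduct.map S S) ((TensorProduct.comm k H H) (Coalgebra.comul (R := k) x)) := by
  classical
  set G : H →ₗ[k] H ⊗[k] H :=
    (TensorProduct.map S S) ∘ₗ (TensorProduct.comm k H H).toLinearMap ∘ₗ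
      (Coalgebra.comul (R := k)) with hG
  set f : H →ₗ[k] H ⊗[k] H := (Coalgebra.comul (R := k)) ∘ₗ S with hf
  set g : H →ₗ[k] H ⊗[k] H := (Coalgebra.comul (R := k)) with hg
  set r : Coalgebra.Repr k x (H × H) := Coalgebra.Repr.arbitrary k x with hr
  set r1 : ∀ i : H × H, Coalgebra.Repr k (r.left i) (H × H) :=
    fun i => Coalgebra.Repr.arbitrary k (r.left i) with hr1
  set r2 : ∀ i : H × H, Coalgebra.Repr k (r.right i) (H × H) :=
    fun i => Coalgebra.Repr.arbitrary k (r.right i) with hr2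
  have shuffle := Coalgebra.sum_map_tmul_tmul_eq (R := k) f g G x
    (repr := r) (a₁ := r1) (a₂ := r2)
  set μ : (H ⊗[k] H) ⊗[k] ((H ⊗[k] H) ⊗[k] (H ⊗[k] H)) →ₗ[k] H ⊗[k] H :=
    (LinearMap.mul' k (H ⊗[k] H)) ∘ₗ
      (LinearMap.mul' k (H ⊗[k] H)).lTensor (H ⊗[k] H) with hμ
  have shuffle' := congrArg μ shuffle
  simp only [map_sum, hμ, LinearMap.comp_apply, LinearMap.lTensor_tmul,
    LinearMap.mul'_apply] at shuffle'
  -- Way 1 : the left side of `shuffle'` equals `comul (S x)`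
  have way1 : ∑ i ∈ r.index, ∑ j ∈ (r2 i).index,
      f (r.left i) * (g ((r2 i).left j) * G ((r2 i).right j))
      = Coalgebra.comul (R := k) (S x) := by
    have inner : ∀ i ∈ r.index, ∑ j ∈ (r2 i).index,
        f (r.left i) * (g ((r2 i).left j) * G ((r2 i).right j))
        = Coalgebra.counit (R := k) (r.right i) • f (r.left i) := by
      intro i _
      rw [← Finset.mul_sum]
      have := conv_right (r.right i) (r2 i).index (r2 i).left (r2 i).right ((r2 i).eq).symm
      simp only [hg, hG, LinearMap.comp_apply, LinearEquiv.coe_coe]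
      rw [this, mul_smul_comm, mul_one]
    rw [Finset.sum_congr rfl inner]
    have hx : ∑ i ∈ r.index, Coalgebra.counit (R := k) (r.right i) • r.left i = x := by
      have h0 := congrArg (TensorProduct.rid k H) (Coalgebra.sum_tmul_counit_eq r)
      simp only [map_sum, TensorProduct.rid_tmul, one_smul] at h0
      exact h0
    calc ∑ i ∈ r.index, Coalgebra.counit (R := k) (r.right i) • f (r.left i)
        = f (∑ i ∈ r.index, Coalgebra.counit (R := k) (r.right i) • r.left i) := by
          rw [map_sum]; exact Finset.sum_congr rfl (fun i _ => (map_smul f _ _).symm)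
      _ = Coalgebra.comul (R := k) (S x) := by rw [hx]; rfl
  -- Way 2 : the right side of `shuffle'` equals `G x`
  have way2 : ∑ i ∈ r.index, ∑ j ∈ (r1 i).index,
      f ((r1 i).left j) * (g ((r1 i).right j) * G (r.right i))
      = G x := by
    have inner : ∀ i ∈ r.index, ∑ j ∈ (r1 i).index,
        f ((r1 i).left j) * (g ((r1 i).right j) * G (r.right i))
        = Coalgebra.counit (R := k) (r.left i) • G (r.right i) := by
      intro i _
      have step : ∀ j ∈ (r1 i).index,
          f ((r1 i).left j) * (g ((r1 i).right j) * G (r.right i))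
          = Coalgebra.comul (R := k) (S ((r1 i).left j) * (r1 i).right j) * G (r.right i) := by
        intro j _
        rw [← mul_assoc, Bialgebra.comul_mul]; rfl
      rw [Finset.sum_congr rfl step, ← Finset.sum_mul, ← map_sum,
        HopfAlgebra.sum_antipode_mul_eq_smul (r1 i), map_smul, Bialgebra.comul_one,
        smul_mul_assoc, one_mul]
    rw [Finset.sum_congr rfl inner]
    have hx : ∑ i ∈ r.index, Coalgebra.counit (R := k) (r.left i) • r.right i = x := by
      have h0 := congrArg (TensorProduct.lid k H) (Coalgebra.sum_counit_tmul_eq r)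
      simp only [map_sum, TensorProduct.lid_tmul, one_smul] at h0
      exact h0
    calc ∑ i ∈ r.index, Coalgebra.counit (R := k) (r.left i) • G (r.right i)
        = G (∑ i ∈ r.index, Coalgebra.counit (R := k) (r.left i) • r.right i) := by
          rw [map_sum]; exact Finset.sum_congr rfl (fun i _ => (map_smul G _ _).symm)
      _ = G x := by rw [hx]
  rw [← way1, shuffle', way2, hG]; rfl

end Aux

/-- A Hopf algebra `K` with bijective antipode, viewed as a
left comodule over itself via the coproduct and a right module over itself via
`x · h = S(h⁽²⁾) x h⁽¹⁾`, is a stable right-left anti-Yetter-Drinfeld module. -/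
theorem stmt14 {k : Type} [Field k] {K : Type} [Ring K] [HopfAlgebra k K]
    (Sinv : K →ₗ[k] K)
    (hS : ∀ h : K, Sinv (HopfAlgebra.antipode (R := k) h) = h)
    (hS' : ∀ h : K, HopfAlgebra.antipode (R := k) (Sinv h) = h) :
    AYDrl (Coalgebra.comul (R := k)) (HopfAlgebra.antipode (R := k))
        (adAct (k := k) (H := K)) (Coalgebra.comul (R := k)) ∧
      StableL (adAct (k := k) (H := K)) (Coalgebra.comul (R := k)) := by
  constructor
  · intro h m s a b t c d u e m0 hh hb hm
    classical
    set r3 : ∀ i j : ℕ, Coalgebra.Repr k (c i j) (K × K) :=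
      fun i j => Coalgebra.Repr.arbitrary k (c i j) with hr3
    set B : K ⊗[k] K →ₗ[k] K ⊗[k] K →ₗ[k] K ⊗[k] K :=
      LinearMap.mk₂ k
        (fun ξ η => (TensorProduct.map (HopfAlgebra.antipode (R := k)) (HopfAlgebra.antipode (R := k))) ((TensorProduct.comm k K K) η) *
          Coalgebra.comul (R := k) m * ξ)
        (fun ξ ξ' η => by rw [mul_add])
        (fun r ξ η => by rw [mul_smul_comm])
        (fun ξ η η' => by rw [map_add, map_add, add_mul, add_mul])
        (fun r ξ η => by rw [map_smul, map_smul, smul_mul_assoc, smul_mul_assoc])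
        with hB
    have key := quad B h s a b t c d hh hb r3
    have lhs : Coalgebra.comul (R := k) (adAct (k := k) h m)
        = ∑ i ∈ s, ∑ j ∈ t i,
            B (Coalgebra.comul (R := k) (a i)) (c i j ⊗ₜ d i j) := by
      rw [act_eq s a b h m hh, map_sum]
      refine Finset.sum_congr rfl (fun i hi => ?_)
      rw [Bialgebra.comul_mul, Bialgebra.comul_mul, comul_antipode, hb i hi]
      simp only [hB, LinearMap.mk₂_apply, map_sum, TensorProduct.comm_tmul,
        TensorProduct.map_tmul, Finset.sum_mul]
    have rhs : ∑ i ∈ s, ∑ j ∈ t i, ∑ q ∈ (r3 i j).index,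
          B (a i ⊗ₜ (r3 i j).left q) ((r3 i j).right q ⊗ₜ d i j)
        = ∑ i ∈ s, ∑ j ∈ t i, ∑ l ∈ u,
            ((HopfAlgebra.antipode (R := k)) (d i j) * e l * a i) ⊗ₜ adAct (k := k) (c i j) (m0 l) := by
      refine Finset.sum_congr rfl fun i _ => Finset.sum_congr rfl fun j _ => ?_
      have left : ∑ q ∈ (r3 i j).index,
          B (a i ⊗ₜ (r3 i j).left q) ((r3 i j).right q ⊗ₜ d i j)
          = ∑ q ∈ (r3 i j).index, ∑ l ∈ u, ((HopfAlgebra.antipode (R := k)) (d i j) * e l * a i) ⊗ₜ[k]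
              ((HopfAlgebra.antipode (R := k)) ((r3 i j).right q) * m0 l * (r3 i j).left q) := by
        refine Finset.sum_congr rfl fun q _ => ?_
        simp only [hB, LinearMap.mk₂_apply, TensorProduct.comm_tmul,
          TensorProduct.map_tmul, hm, Finset.mul_sum, Finset.sum_mul,
          Algebra.TensorProduct.tmul_mul_tmul]
      have right : ∀ l ∈ u, ((HopfAlgebra.antipode (R := k)) (d i j) * e l * a i) ⊗ₜ[k] adAct (k := k) (c i j) (m0 l)
          = ∑ q ∈ (r3 i j).index, ((HopfAlgebra.antipode (R := k)) (d i j) * e l * a i) ⊗ₜ[k]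
              ((HopfAlgebra.antipode (R := k)) ((r3 i j).right q) * m0 l * (r3 i j).left q) := by
        intro l _
        rw [act_eq (r3 i j).index (r3 i j).left (r3 i j).right (c i j) (m0 l)
          ((r3 i j).eq).symm, TensorProduct.tmul_sum]
      rw [left, Finset.sum_comm, Finset.sum_congr rfl right]
    rw [lhs, key, rhs]
  · intro m u e m0 hm
    classical
    set rl : ∀ l : ℕ, Coalgebra.Repr k (e l) (K × K) :=
      fun l => Coalgebra.Repr.arbitrary k (e l) with hrl
    set rm : ∀ l : ℕ, Coalgebra.Repr k (m0 l) (K × K) :=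
      fun l => Coalgebra.Repr.arbitrary k (m0 l) with hrm
    set T : K →ₗ[k] K →ₗ[k] K →ₗ[k] K :=
      LinearMap.mk₂ k
        (fun f g => (LinearMap.mulLeft k ((HopfAlgebra.antipode (R := k)) g)) ∘ₗ (LinearMap.mulRight k f))
        (fun f f' g => by
          ext n
          simp [LinearMap.mulLeft_apply, LinearMap.mulRight_apply, mul_add])
        (fun r f g => by
          ext n
          simp [LinearMap.mulLeft_apply, LinearMap.mulRight_apply, mul_smul_comm])
        (fun f g g' => by
          ext n
          simp [LinearMap.mulLeft_apply, LinearMap.mulRight_apply, add_mul])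
        (fun r f g => by
          ext n
          simp [LinearMap.mulLeft_apply, LinearMap.mulRight_apply, smul_mul_assoc])
        with hT
    set G : (K ⊗[k] K) ⊗[k] K →ₗ[k] K := TensorProduct.lift (TensorProduct.lift T) with hG
    have cs := Coalgebra.coassoc_symm_apply (R := k) m
    rw [hm] at cs
    simp only [map_sum, LinearMap.lTensor_tmul, LinearMap.rTensor_tmul] at cs
    have cg := congrArg G cs
    simp only [map_sum] at cg
    have hA : ∀ l ∈ u, G ((TensorProduct.assoc k K K K).symm
          (e l ⊗ₜ Coalgebra.comul (R := k) (m0 l)))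
        = Coalgebra.counit (R := k) (m0 l) • e l := by
      intro l _
      rw [← (rm l).eq]
      simp only [TensorProduct.tmul_sum, map_sum, TensorProduct.assoc_symm_tmul, hG,
        TensorProduct.lift.tmul, hT, LinearMap.mk₂_apply, LinearMap.comp_apply,
        LinearMap.mulLeft_apply, LinearMap.mulRight_apply]
      have assoc' : ∀ w ∈ (rm l).index, (HopfAlgebra.antipode (R := k)) ((rm l).left w) * (((rm l).right w) * e l)
          = ((HopfAlgebra.antipode (R := k)) ((rm l).left w) * ((rm l).right w)) * e l := fun w _ => (mul_assoc _ _ _).symm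
      rw [Finset.sum_congr rfl assoc', ← Finset.sum_mul,
        HopfAlgebra.sum_antipode_mul_eq_smul (rm l), smul_mul_assoc, one_mul]
    have hBb : ∀ l ∈ u, G ((Coalgebra.comul (R := k) (e l)) ⊗ₜ[k] m0 l)
        = adAct (k := k) (e l) (m0 l) := by
      intro l _
      rw [act_eq (rl l).index (rl l).left (rl l).right (e l) (m0 l) ((rl l).eq).symm,
        ← (rl l).eq, TensorProduct.sum_tmul, map_sum]
      refine Finset.sum_congr rfl fun q _ => ?_
      simp only [hG, TensorProduct.lift.tmul, hT, LinearMap.mk₂_apply, LinearMap.comp_apply,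
        LinearMap.mulLeft_apply, LinearMap.mulRight_apply, mul_assoc]
    have fin : ∑ l ∈ u, Coalgebra.counit (R := k) (m0 l) • e l = m := by
      have h0 := congrArg (TensorProduct.rid k K)
        (Coalgebra.sum_tmul_counit_eq (⟨u, e, m0, hm.symm⟩ : Coalgebra.Repr k m ℕ))
      simp only [map_sum, TensorProduct.rid_tmul, one_smul] at h0
      exact h0
    calc ∑ l ∈ u, adAct (k := k) (e l) (m0 l)
        = ∑ l ∈ u, G ((Coalgebra.comul (R := k) (e l)) ⊗ₜ[k] m0 l) :=
          (Finset.sum_congr rfl fun l hl => (hBb l hl).symm)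
      _ = ∑ l ∈ u, G ((TensorProduct.assoc k K K K).symm
            (e l ⊗ₜ Coalgebra.comul (R := k) (m0 l))) := cg.symm
      _ = ∑ l ∈ u, Coalgebra.counit (R := k) (m0 l) • e l :=
          Finset.sum_congr rfl hA
      _ = m := fin
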